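/- Let n ≥ 1 and 1 ≤ k ≤ n. For every n×n real matrix A and every n×n real matrix H, the function t ↦ σ_k(A + tH) is differentiable at t = 0 and d/dt|_{t=0} σ_k(A + tH) = trace(T_{k−1}(A) · H). In other words, the Newton transformation T_{k−1}(A) is the gradient of σ_k with respect to the matrix entries: T_{k−1}(A)^i_j = ∂σ_k(A)/∂A_{ij}. -/

import Mathlib

open Polynomial Matrix Finset

section Aux

variable {R : Type*} [CommRing R] {n : ℕ}

private lemma det_updateRow_eq (M N : Matrix (Fin n) (Fin n) R) (j : Fin n) :
    (M.updateRow j (N j)).det = ∑ i, N j i * M.adjugate i j := by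
  have h : ∀ v : Fin n → R, (M.updateRow j v).det = cramer Mᵀ v j := by
    intro v
    rw [cramer_apply, updateCol_transpose, det_transpose]
  rw [h]
  have hN : N j = ∑ i, N j i • (Pi.single i 1 : Fin n → R) := by
    ext i'
    simp [Pi.single_apply, eq_comm]
  conv_lhs => rw [hN]
  rw [map_sum]
  simp only [Finset.sum_apply, LinearMap.map_smul, Pi.smul_apply, smul_eq_mul]
  refine Finset.sum_congr rfl fun i _ => ?_
  rw [adjugate_apply, h]

private lemma trace_adjugate_mul (M N : Matrix (Fin n) (Fin n) R) :
    Matrix.trace (M.adjugate * N) = ∑ j, (M.updateRow j (N j)).det := by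
  simp only [det_updateRow_eq, Matrix.trace, Matrix.diag, Matrix.mul_apply]
  rw [Finset.sum_comm]
  simp [mul_comm]

/-- The linear coefficient of `det (M + X • N)`. -/
private lemma coeff_one_det_add_X_smul (M N : Matrix (Fin n) (Fin n) R) :
    (Matrix.det (M.map C + (X : R[X]) • N.map C)).coeff 1 =
      Matrix.trace (M.adjugate * N) := by
  classical
  set f := (detRowAlternating (R := R[X]) (n := Fin n)).toMultilinearMap with hf
  have key : Matrix.det (M.map C + (X : R[X]) • N.map C) =
      ∑ s : Finset (Fin n), X ^ s.card *
        C (Matrix.det (Matrix.of fun i j => if i ∈ s then N i j else M i j)) := by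
    have hdet : Matrix.det (M.map C + (X : R[X]) • N.map C)
        = f (((X : R[X]) • N.map C) + M.map C) := by
      rw [add_comm]
      rfl
    rw [hdet]
    refine (f.map_add_univ (((X : R[X]) • N.map C : Matrix (Fin n) (Fin n) R[X])) (M.map C)).trans ?_
    refine Finset.sum_congr rfl fun s _ => ?_
    set m : Fin n → Fin n → R[X] := s.piecewise (N.map C) (M.map C) with hm
    have hpw : s.piecewise (((X : R[X]) • N.map C) : Matrix (Fin n) (Fin n) R[X]) (M.map C)
        = s.piecewise (fun i => (X : R[X]) • m i) m := by
      funext i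
      by_cases h : i ∈ s
      · simp only [hm, Finset.piecewise, if_pos h]
        rfl
      · simp only [hm, Finset.piecewise, if_neg h]
    rw [hpw, f.map_piecewise_smul (fun _ => (X : R[X])) m s]
    have hmmat : m = ((Matrix.of fun i j => if i ∈ s then N i j else M i j).map C :
        Matrix (Fin n) (Fin n) R[X]) := by
      funext i j
      by_cases h : i ∈ s <;>
        simp [hm, Finset.piecewise_eq_of_mem, Finset.piecewise_eq_of_notMem, Finset.piecewise, h,
          Matrix.map_apply]
    have hdm : f m
        = C (Matrix.det (Matrix.of fun i j => if i ∈ s then N i j else M i j)) := by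
      rw [hmmat]
      exact ((C : R →+* R[X]).map_det _).symm
    rw [hdm, Finset.prod_const, smul_eq_mul]
  rw [key, finset_sum_coeff]
  have hcoeff : ∀ s : Finset (Fin n),
      (X ^ s.card * C (Matrix.det (Matrix.of fun i j =>
        if i ∈ s then N i j else M i j))).coeff 1
      = if s.card = 1 then
          Matrix.det (Matrix.of fun i j => if i ∈ s then N i j else M i j) else 0 := by
    intro s
    rw [mul_comm, C_mul_X_pow_eq_monomial, coeff_monomial]
  simp only [hcoeff]
  rw [← Finset.sum_filter]
  have hfil : Finset.univ.filter (fun s : Finset (Fin n) => s.card = 1)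
      = Finset.univ.image (fun i : Fin n => ({i} : Finset (Fin n))) := by
    ext s
    simp [Finset.card_eq_one, eq_comm]
  rw [hfil, Finset.sum_image (fun a _ b _ h => Finset.singleton_injective h)]
  rw [trace_adjugate_mul]
  refine Finset.sum_congr rfl fun i _ => ?_
  congr 1
  ext i' j
  by_cases h : i' = i <;> simp [Matrix.updateRow_apply, h]

end Aux

section Adjugate

/-- Horner-type expansion of the adjugate of the characteristic matrix. -/
private lemma adjugate_charmatrix {n : ℕ} (hn : 0 < n) (A : Matrix (Fin n) (Fin n) ℝ) :
    (Matrix.charmatrix A).adjugate =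
      ∑ j ∈ Finset.range n, (X : ℝ[X]) ^ j •
        (∑ m ∈ Finset.Icc (j+1) n, (Matrix.charpoly A).coeff m • A ^ (m - 1 - j)).map C := by
  classical
  set c : ℕ → ℝ := fun m => (Matrix.charpoly A).coeff m with hc
  set B : ℕ → Matrix (Fin n) (Fin n) ℝ :=
    fun j => ∑ m ∈ Finset.Icc (j+1) n, c m • A ^ (m - 1 - j) with hB
  have hB' : ∀ j, B j = ∑ m ∈ Finset.Icc (j+1) n, c m • A ^ (m - 1 - j) := fun _ => rfl
  have hc' : ∀ m, (Matrix.charpoly A).coeff m = c m := fun _ => rfl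
  set S : Matrix (Fin n) (Fin n) ℝ[X] :=
    ∑ j ∈ Finset.range n, (X : ℝ[X]) ^ j • (B j).map C with hS
  -- the recurrence
  have hrec : ∀ m, 1 ≤ m → m ≤ n → B (m - 1) - A * B m = c m • 1 := by
    intro m h1 h2
    have hBm1 : B (m - 1) = c m • (1 : Matrix (Fin n) (Fin n) ℝ)
        + ∑ l ∈ Finset.Icc (m+1) n, c l • A ^ (l - m) := by
      rw [hB' (m-1)]
      have h3 : m - 1 + 1 = m := by omega
      rw [h3]
      have h4 : ∑ l ∈ Finset.Icc m n, c l • A ^ (l - 1 - (m - 1))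
          = ∑ l ∈ Finset.Icc m n, c l • A ^ (l - m) := by
        refine Finset.sum_congr rfl fun l hl => ?_
        rw [Finset.mem_Icc] at hl
        have heq : l - 1 - (m - 1) = l - m := by omega
        rw [heq]
      rw [h4, Finset.Icc_eq_cons_Ioc h2, Finset.sum_cons, Nat.sub_self, pow_zero,
        ← Finset.Icc_add_one_left_eq_Ioc]
    have hABm : A * B m = ∑ l ∈ Finset.Icc (m+1) n, c l • A ^ (l - m) := by
      rw [hB' m, Finset.mul_sum]
      refine Finset.sum_congr rfl fun l hl => ?_
      rw [Finset.mem_Icc] at hl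
      rw [mul_smul_comm]
      have heq : A ^ (l - m) = A * A ^ (l - 1 - m) := by
        conv_lhs => rw [show l - m = (l - 1 - m) + 1 by omega]
        rw [pow_succ']
      rw [heq]
    rw [hBm1, hABm]
    abel
  -- Cayley-Hamilton
  have hCH : A * B 0 + c 0 • 1 = 0 := by
    have h0 : (Matrix.charpoly A).natDegree = n := by
      simp [Matrix.charpoly_natDegree_eq_dim]
    have haev := Matrix.aeval_self_charpoly A
    rw [aeval_eq_sum_range' (n := n + 1) (by omega) A] at haev
    have hsum : ∑ i ∈ Finset.range (n + 1), c i • A ^ i = 0 := haev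
    have hr : Finset.range (n + 1) = Finset.Icc 0 n := by
      rw [Finset.range_eq_Ico, Finset.Ico_add_one_right_eq_Icc]
    rw [hr, Finset.Icc_eq_cons_Ioc (Nat.zero_le n), Finset.sum_cons, pow_zero,
      ← Finset.Icc_add_one_left_eq_Ioc] at hsum
    have hAB : A * B 0 = ∑ l ∈ Finset.Icc 1 n, c l • A ^ l := by
      rw [hB' 0, Finset.mul_sum]
      refine Finset.sum_congr rfl fun l hl => ?_
      rw [Finset.mem_Icc] at hl
      rw [mul_smul_comm]
      have heq : A ^ l = A * A ^ (l - 1 - 0) := by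
        conv_lhs => rw [show l = (l - 1 - 0) + 1 by omega]
        rw [pow_succ']
      rw [heq]
    rw [hAB, add_comm] at *
    rw [add_comm] at hsum ⊢
    linear_combination (norm := abel) hsum
  -- the key multiplication identity
  have hmul : Matrix.charmatrix A * S
      = Matrix.charpoly A • (1 : Matrix (Fin n) (Fin n) ℝ[X]) := by
    apply matPolyEquiv.injective
    rw [_root_.map_mul, matPolyEquiv_charmatrix, matPolyEquiv_smul_one]
    have hSeq : matPolyEquiv S
        = ∑ j ∈ Finset.range n, (monomial j (B j) : (Matrix (Fin n) (Fin n) ℝ)[X]) := by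
      rw [hS, map_sum]
      refine Finset.sum_congr rfl fun j _ => ?_
      rw [matPolyEquiv_map_smul, matPolyEquiv_map_C, Polynomial.map_pow, Polynomial.map_X,
        X_pow_mul, C_mul_X_pow_eq_monomial]
    rw [hSeq]
    ext m : 1
    rw [Finset.mul_sum, finset_sum_coeff]
    have hterm : ∀ j, (((X : (Matrix (Fin n) (Fin n) ℝ)[X]) - C A) * monomial j (B j)).coeff m
        = (if j + 1 = m then B j else 0) - (if j = m then A * B j else 0) := by
      intro j
      have : ((X : (Matrix (Fin n) (Fin n) ℝ)[X]) - C A) * monomial j (B j)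
          = monomial (j+1) (B j) - monomial j (A * B j) := by
        rw [sub_mul]
        congr 1
        · rw [← monomial_one_one_eq_X, monomial_mul_monomial, one_mul, add_comm]
        · rw [← monomial_zero_left, monomial_mul_monomial, zero_add]
      rw [this, coeff_sub, coeff_monomial, coeff_monomial]
    simp only [hterm]
    have h1 : ∑ j ∈ Finset.range n, ((if j + 1 = m then B j else 0)
          - (if j = m then A * B j else 0))
        = (if 1 ≤ m ∧ m ≤ n then B (m-1) else 0) - (if m < n then A * B m else 0) := by
      rw [Finset.sum_sub_distrib]
      congr 1
      · split_ifs with h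
        · rw [Finset.sum_eq_single (m - 1)]
          · rw [if_pos (by omega)]
          · intro j hj hne
            rw [Finset.mem_range] at hj
            rw [if_neg (by omega)]
          · intro hmem
            rw [Finset.mem_range] at hmem
            omega
        · apply Finset.sum_eq_zero
          intro j hj
          rw [Finset.mem_range] at hj
          rw [if_neg (by omega)]
      · split_ifs with h
        · rw [Finset.sum_eq_single m]
          · rw [if_pos rfl]
          · intro j hj hne
            rw [if_neg hne]
          · intro hmem
            rw [Finset.mem_range] at hmem
            omega
        · apply Finset.sum_eq_zero
          intro j hj
          rw [Finset.mem_range] at hj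
          rw [if_neg (by omega)]
    rw [h1, coeff_map, hc' m, Algebra.algebraMap_eq_smul_one]
    by_cases hm0 : m = 0
    · subst hm0
      rw [if_neg (by omega), if_pos hn, zero_sub]
      exact neg_eq_iff_add_eq_zero.mpr hCH
    · by_cases hmn : m ≤ n
      · rw [if_pos (by omega)]
        by_cases hmn' : m < n
        · rw [if_pos hmn']
          exact hrec m (by omega) hmn
        · rw [if_neg hmn', sub_zero]
          have h5 := hrec m (by omega) hmn
          have hBn : B m = 0 := by
            rw [hB' m, Finset.Icc_eq_empty (by omega), Finset.sum_empty]
          rw [hBn, mul_zero, sub_zero] at h5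
          exact h5
      · rw [if_neg (by omega), if_neg (by omega), sub_zero]
        have hcm : c m = 0 := by
          rw [← hc' m]
          apply coeff_eq_zero_of_natDegree_lt
          simp only [Matrix.charpoly_natDegree_eq_dim, Fintype.card_fin]
          omega
        rw [hcm, zero_smul]
  -- conclude via cancellation
  have hadj := Matrix.mul_adjugate (Matrix.charmatrix A)
  have hdet : (Matrix.charmatrix A).det = Matrix.charpoly A := rfl
  have hzero : Matrix.charpoly A • (S - (Matrix.charmatrix A).adjugate) = 0 := by
    have h2 : Matrix.charmatrix A * (S - (Matrix.charmatrix A).adjugate) = 0 := by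
      rw [Matrix.mul_sub, hmul, hadj, hdet, sub_self]
    calc Matrix.charpoly A • (S - (Matrix.charmatrix A).adjugate)
        = ((Matrix.charmatrix A).adjugate * Matrix.charmatrix A)
            * (S - (Matrix.charmatrix A).adjugate) := by
          rw [Matrix.adjugate_mul, hdet, Matrix.smul_mul, Matrix.one_mul]
      _ = (Matrix.charmatrix A).adjugate
            * (Matrix.charmatrix A * (S - (Matrix.charmatrix A).adjugate)) := by
          rw [Matrix.mul_assoc]
      _ = 0 := by rw [h2, Matrix.mul_zero]
  have hcp : Matrix.charpoly A ≠ 0 := (Matrix.charpoly_monic A).ne_zero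
  have hSadj : S = (Matrix.charmatrix A).adjugate := by
    ext i j : 1
    have h3 := congrFun (congrFun hzero i) j
    have h4 : Matrix.charpoly A * ((S - (Matrix.charmatrix A).adjugate) i j) = 0 := by
      simpa [Matrix.smul_apply, smul_eq_mul] using h3
    rcases mul_eq_zero.mp h4 with h | h
    · exact absurd h hcp
    · have h5 : S i j - (Matrix.charmatrix A).adjugate i j = 0 := by
        simpa [Matrix.sub_apply] using h
      exact sub_eq_zero.mp h5
  rw [← hSadj]

end Adjugate

/-- `σ_k(A)` for an `n×n` real matrix `A`, defined via the characteristic polynomial: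
`det(t·I − A) = Σ_{k=0}^n (−1)^k σ_k(A) t^{n−k}`, i.e. `σ_k(A) = (−1)^k · coeff_{n−k}(charpoly A)`. -/
noncomputable def sigmaMat (n k : ℕ) (A : Matrix (Fin n) (Fin n) ℝ) : ℝ :=
  (-1 : ℝ) ^ k * (Matrix.charpoly A).coeff (n - k)

/-- The `k`-th Newton transformation
`T_k(A) = σ_k(A)·I − σ_{k−1}(A)·A + σ_{k−2}(A)·A² − ⋯ + (−1)^k A^k`. -/
noncomputable def newtonT (n k : ℕ) (A : Matrix (Fin n) (Fin n) ℝ) :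
    Matrix (Fin n) (Fin n) ℝ :=
  ∑ j ∈ Finset.range (k + 1), ((-1 : ℝ) ^ j * sigmaMat n (k - j) A) • A ^ j

/-- The function `t ↦ σ_k(A + tH)` is differentiable at `t = 0` with derivative
`trace(T_{k−1}(A) · H)`; i.e. `T_{k−1}(A)` is the gradient of `σ_k` in the matrix entries. -/
theorem hasDerivAt_sigmaMat (n k : ℕ) (hn : 1 ≤ n) (hk1 : 1 ≤ k) (hk2 : k ≤ n)
    (A H : Matrix (Fin n) (Fin n) ℝ) :
    HasDerivAt (fun t : ℝ => sigmaMat n k (A + t • H))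
      (Matrix.trace (newtonT n (k - 1) A * H)) 0 := by
  classical
  set M₀ : Matrix (Fin n) (Fin n) ℝ[X] := Matrix.charmatrix A with hM₀
  set N₀ : Matrix (Fin n) (Fin n) ℝ[X] := -(H.map C) with hN₀
  set P : Polynomial ℝ[X] :=
    Matrix.det (M₀.map C + (X : (ℝ[X])[X]) • N₀.map C) with hP
  -- the charmatrix of `A + t • H`
  have hchm : ∀ t : ℝ, Matrix.charmatrix (A + t • H) = M₀ + (C t : ℝ[X]) • N₀ := by
    intro t
    ext i j : 1
    simp only [hM₀, hN₀, Matrix.charmatrix_apply, Matrix.add_apply, Matrix.smul_apply,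
      Matrix.neg_apply, Matrix.map_apply, Matrix.smul_apply, smul_eq_mul, map_add, C_mul]
    ring
  -- evaluation of the two-variable polynomial
  have heval : ∀ t : ℝ, Matrix.charpoly (A + t • H) = P.eval (C t : ℝ[X]) := by
    intro t
    have hmap : (M₀.map C + (X : (ℝ[X])[X]) • N₀.map C).map (eval (C t : ℝ[X]))
        = M₀ + (C t : ℝ[X]) • N₀ := by
      ext i j : 1
      simp only [Matrix.map_apply, Matrix.add_apply, Matrix.smul_apply, smul_eq_mul,
        eval_add, eval_mul, eval_C, eval_X]
    calc Matrix.charpoly (A + t • H) = (Matrix.charmatrix (A + t • H)).det := rfl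
      _ = (M₀ + (C t : ℝ[X]) • N₀).det := by rw [hchm]
      _ = ((M₀.map C + (X : (ℝ[X])[X]) • N₀.map C).map (eval (C t : ℝ[X]))).det := by
          rw [hmap]
      _ = P.eval (C t : ℝ[X]) := by
          rw [hP, ← coe_evalRingHom, ← RingHom.mapMatrix_apply, ← RingHom.map_det]
  set d := P.natDegree with hd
  -- the function as a polynomial in `t`
  have hfun : ∀ t : ℝ, sigmaMat n k (A + t • H)
      = (-1:ℝ)^k * ∑ j ∈ Finset.range (d + 2), (P.coeff j).coeff (n - k) * t ^ j := by
    intro t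
    simp only [sigmaMat]
    rw [heval t]
    congr 1
    rw [Polynomial.eval_eq_sum_range' (show P.natDegree < d + 2 by omega),
      finset_sum_coeff]
    refine Finset.sum_congr rfl fun j _ => ?_
    rw [← C_pow, coeff_mul_C]
  -- differentiability
  have h1 : HasDerivAt (fun t : ℝ =>
      ∑ j ∈ Finset.range (d + 2), (P.coeff j).coeff (n - k) * t ^ j)
      (∑ j ∈ Finset.range (d + 2), (P.coeff j).coeff (n - k) * ((j : ℝ) * 0 ^ (j - 1))) 0 := by
    apply HasDerivAt.fun_sum
    intro j _
    exact (hasDerivAt_pow j 0).const_mul _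
  have h2 : ∑ j ∈ Finset.range (d + 2), (P.coeff j).coeff (n - k) * ((j:ℝ) * 0 ^ (j-1))
      = (P.coeff 1).coeff (n - k) := by
    rw [Finset.sum_eq_single 1]
    · norm_num
    · intro j hj hne
      rcases Nat.eq_zero_or_pos j with h | h
      · subst h; norm_num
      · have hj1 : j - 1 ≠ 0 := by omega
        rw [zero_pow hj1]
        ring
    · intro h
      exact absurd (Finset.mem_range.mpr (by omega)) h
  have hder : HasDerivAt (fun t : ℝ => sigmaMat n k (A + t • H))
      ((-1:ℝ)^k * ((P.coeff 1).coeff (n - k))) 0 := by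
    have h3 := h1.const_mul ((-1:ℝ)^k)
    rw [h2] at h3
    have hfe : (fun t : ℝ => sigmaMat n k (A + t • H))
        = fun t => (-1:ℝ)^k * ∑ j ∈ Finset.range (d + 2), (P.coeff j).coeff (n - k) * t ^ j :=
      funext hfun
    rw [hfe]
    exact h3
  -- identify the derivative
  have hc1 : P.coeff 1 = Matrix.trace (M₀.adjugate * N₀) := coeff_one_det_add_X_smul M₀ N₀
  have htrmap : ∀ Q : Matrix (Fin n) (Fin n) ℝ, Matrix.trace (Q.map C) = C (Matrix.trace Q) := by
    intro Q
    simp [Matrix.trace, Matrix.diag, Matrix.map_apply, map_sum]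
  have hAdjEq := adjugate_charmatrix (show 0 < n by omega) A
  have htr : Matrix.trace (M₀.adjugate * H.map C)
      = ∑ j ∈ Finset.range n, (X:ℝ[X])^j * C (Matrix.trace
          ((∑ m ∈ Finset.Icc (j+1) n, (Matrix.charpoly A).coeff m • A ^ (m-1-j)) * H)) := by
    rw [hM₀, hAdjEq, Finset.sum_mul]
    have hterm : ∀ j, ((X:ℝ[X])^j •
          (∑ m ∈ Finset.Icc (j+1) n, (Matrix.charpoly A).coeff m • A ^ (m-1-j)).map C)
            * H.map C
        = (X:ℝ[X])^j •
            ((∑ m ∈ Finset.Icc (j+1) n, (Matrix.charpoly A).coeff m • A ^ (m-1-j)) * H).map C := by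
      intro j
      rw [Matrix.smul_mul, Matrix.map_mul]
    simp only [hterm]
    rw [Matrix.trace_sum]
    refine Finset.sum_congr rfl fun j _ => ?_
    rw [Matrix.trace_smul, htrmap, smul_eq_mul]
  have hcoeffnk : (P.coeff 1).coeff (n - k)
      = - Matrix.trace ((∑ m ∈ Finset.Icc (n-k+1) n,
          (Matrix.charpoly A).coeff m • A ^ (m-1-(n-k))) * H) := by
    rw [hc1, hN₀, Matrix.mul_neg, Matrix.trace_neg, coeff_neg, htr, finset_sum_coeff]
    have hterm : ∀ j, (((X:ℝ[X])^j * C (Matrix.trace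
          ((∑ m ∈ Finset.Icc (j+1) n, (Matrix.charpoly A).coeff m • A ^ (m-1-j)) * H))).coeff (n-k))
        = if j = n - k then Matrix.trace
            ((∑ m ∈ Finset.Icc (j+1) n, (Matrix.charpoly A).coeff m • A ^ (m-1-j)) * H) else 0 := by
      intro j
      rw [mul_comm, C_mul_X_pow_eq_monomial, coeff_monomial]
    simp only [hterm]
    rw [Finset.sum_ite_eq' (Finset.range n) (n-k)]
    rw [if_pos (Finset.mem_range.mpr (by omega))]
  -- Newton transformation identification
  have hNewton : newtonT n (k-1) A = ((-1:ℝ)^(k-1)) •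
      ∑ m ∈ Finset.Icc (n-k+1) n, (Matrix.charpoly A).coeff m • A ^ (m-1-(n-k)) := by
    simp only [newtonT]
    have hk' : k - 1 + 1 = k := by omega
    rw [hk', Finset.smul_sum]
    conv_rhs => rw [show Finset.Icc (n-k+1) n = Finset.Ico (n-k+1) (n+1) from by
      rw [Finset.Ico_add_one_right_eq_Icc]]
    rw [Finset.sum_Ico_eq_sum_range]
    have hcard : n + 1 - (n - k + 1) = k := by omega
    rw [hcard]
    refine Finset.sum_congr rfl fun j hj => ?_
    rw [Finset.mem_range] at hj
    simp only [sigmaMat]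
    have he1 : n - k + 1 + j - 1 - (n - k) = j := by omega
    have he2 : n - (k - 1 - j) = n - k + 1 + j := by omega
    rw [he1, he2, smul_smul]
    congr 1
    rw [← mul_assoc, ← pow_add]
    congr 2
    omega
  have hval : (-1:ℝ)^k * ((P.coeff 1).coeff (n-k)) = Matrix.trace (newtonT n (k-1) A * H) := by
    rw [hcoeffnk, hNewton, Matrix.smul_mul, Matrix.trace_smul, smul_eq_mul]
    have hkk : (-1:ℝ)^k = (-1)^(k-1) * (-1) := by
      conv_lhs => rw [show k = (k-1)+1 by omega]
      rw [pow_succ]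
    rw [hkk]
    ring
  rwa [hval] at hder
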